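/- For all real numbers ε > 0 and Δt > 0, one has |(2/ε)·e^{-Δt/(2ε²)}/(e^{-Δt/ε²} + 1) - 1/ε| ≤ Δt²/(8·ε⁵). -/

import Mathlib

lemma aux_sinh_le (t : ℝ) (ht : 0 ≤ t) : Real.sinh t ≤ t * Real.cosh t := by
  have key : MonotoneOn (fun s => s * Real.cosh s - Real.sinh s) (Set.Ici 0) := by
    apply monotoneOn_of_deriv_nonneg (convex_Ici 0)
    · fun_prop
    · intro s _
      exact ((differentiable_id.mul Real.differentiable_cosh).sub
        Real.differentiable_sinh).differentiableAt.differentiableWithinAt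
    · intro s hs
      rw [interior_Ici] at hs
      have hd : HasDerivAt (fun s => s * Real.cosh s - Real.sinh s) (s * Real.sinh s) s := by
        have h1 : HasDerivAt (fun s : ℝ => s * Real.cosh s)
            (1 * Real.cosh s + s * Real.sinh s) s :=
          (hasDerivAt_id s).mul (Real.hasDerivAt_cosh s)
        have h2 := h1.sub (Real.hasDerivAt_sinh s)
        exact h2.congr_deriv (by ring)
      rw [hd.deriv]
      exact mul_nonneg hs.le (Real.sinh_nonneg_iff.mpr hs.le)
  have h0 := key (Set.self_mem_Ici) (Set.mem_Ici.mpr ht) ht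
  simp at h0
  linarith

lemma aux_cosh_bound (t : ℝ) (ht : 0 ≤ t) :
    Real.cosh t - 1 ≤ t ^ 2 / 2 * Real.cosh t := by
  have key : MonotoneOn (fun s => s ^ 2 / 2 * Real.cosh s - (Real.cosh s - 1)) (Set.Ici 0) := by
    apply monotoneOn_of_deriv_nonneg (convex_Ici 0)
    · fun_prop
    · intro s _
      exact (((differentiable_pow 2).div_const 2).mul Real.differentiable_cosh).sub
        (Real.differentiable_cosh.sub_const 1) |>.differentiableAt.differentiableWithinAt
    · intro s hs
      rw [interior_Ici] at hs
      have hd : HasDerivAt (fun s : ℝ => s ^ 2 / 2 * Real.cosh s - (Real.cosh s - 1))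
          (s * Real.cosh s - Real.sinh s + s ^ 2 / 2 * Real.sinh s) s := by
        have h1 : HasDerivAt (fun s : ℝ => s ^ 2 / 2) s s := by
          have := (hasDerivAt_pow 2 s).div_const 2
          exact this.congr_deriv (by ring)
        have h2 := (h1.mul (Real.hasDerivAt_cosh s)).sub
          ((Real.hasDerivAt_cosh s).sub_const 1)
        exact h2.congr_deriv (by ring)
      rw [hd.deriv]
      have hA := aux_sinh_le s hs.le
      have hS := Real.sinh_nonneg_iff.mpr hs.le
      nlinarith
  have h0 := key (Set.self_mem_Ici) (Set.mem_Ici.mpr ht) ht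
  simp at h0
  linarith

theorem stmt_7 (ε Δt : ℝ) (hε : 0 < ε) (hΔt : 0 < Δt) :
    |(2 / ε) * (Real.exp (-Δt / (2 * ε ^ 2)) / (Real.exp (-Δt / ε ^ 2) + 1)) - 1 / ε|
      ≤ Δt ^ 2 / (8 * ε ^ 5) := by
  set x := Δt / (2 * ε ^ 2) with hx
  have hε2 : (0:ℝ) < ε ^ 2 := by positivity
  have hxpos : 0 < x := by positivity
  have hx1 : -Δt / (2 * ε ^ 2) = -x := by rw [hx]; ring
  have hx2 : -Δt / ε ^ 2 = -(2 * x) := by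
    rw [hx]; field_simp
  rw [hx1, hx2]
  have hu : Real.exp (-(2 * x)) = Real.exp (-x) ^ 2 := by
    rw [← Real.exp_nat_mul]
    ring_nf
  have hc : Real.cosh x = (Real.exp (-x) ^ 2 + 1) / (2 * Real.exp (-x)) := by
    rw [Real.cosh_eq]
    have h := Real.exp_pos (-x)
    have h1 : Real.exp x * Real.exp (-x) = 1 := by rw [← Real.exp_add]; simp
    field_simp
    nlinarith [h1]
  have hcpos : 0 < Real.cosh x := Real.cosh_pos x
  have hc1 : 1 ≤ Real.cosh x := Real.one_le_cosh x
  have hupos : 0 < Real.exp (-x) := Real.exp_pos _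
  have hmain : (2 / ε) * (Real.exp (-x) / (Real.exp (-x) ^ 2 + 1)) = 1 / (ε * Real.cosh x) := by
    rw [hc]
    have hden : (0:ℝ) < Real.exp (-x) ^ 2 + 1 := by positivity
    field_simp
  rw [hu, hmain]
  have hle : 1 / (ε * Real.cosh x) ≤ 1 / ε := by
    apply div_le_div_of_nonneg_left one_pos.le hε
    nlinarith
  rw [abs_sub_comm, abs_of_nonneg (by linarith)]
  have hB := aux_cosh_bound x hxpos.le
  have hrhs : Δt ^ 2 / (8 * ε ^ 5) = x ^ 2 / (2 * ε) := by
    rw [hx]; field_simp; ring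
  rw [hrhs]
  have heq : 1 / ε - 1 / (ε * Real.cosh x) = (Real.cosh x - 1) / (ε * Real.cosh x) := by
    field_simp
  rw [heq]
  rw [div_le_div_iff₀ (by positivity) (by positivity)]
  nlinarith [sq_nonneg x, hε.le, mul_pos hε hcpos]
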